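/- arXiv:1012.2422 — 2 statements merged into one kernel-verified Lean document; each statement's English description precedes it below -/
import Mathlib

section
/- For any 3-break rearrangement r applied to a breakpoint graph, the increase Δ_r c^odd in the number of odd black-gray cycles (cycles containing an odd number of black edges) is even and satisfies |Δ_r c^odd| ≤ 2. -/
open Finset

/-- A genome on a vertex set `V` of gene extremities: a perfect matching,
encoded as a fixed-point-free involution. -/
structure Genome (V : Type*) [Fintype V] [DecidableEq V] where
  perm : Equiv.Perm V
  invol : ∀ v, perm (perm v) = v
  noFix : ∀ v, perm v ≠ v

namespace Genome

variable {V : Type*} [Fintype V] [DecidableEq V]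

/-- Number of vertices whose matching partner differs between `P` and `P'`
(each changed black edge contributes 2 vertices). -/
def changed (P P' : Genome V) : ℕ :=
  (univ.filter fun v => P.perm v ≠ P'.perm v).card

/-- A 2-break changes exactly 2 black edges. -/
def Is2Break (P P' : Genome V) : Prop := changed P P' = 4

/-- A complete 3-break changes exactly 3 black edges. -/
def IsComplete3Break (P P' : Genome V) : Prop := changed P P' = 6

/-- A 3-break changes 2 or 3 black edges. -/
def Is3Break (P P' : Genome V) : Prop := Is2Break P P' ∨ IsComplete3Break P P'

/-- The permutation whose orbits trace the black-gray alternating cycles of the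
breakpoint graph `G(P,Q)`; each alternating cycle with `k` black edges yields
exactly two orbits of size `k`. -/
def sigma (P Q : Genome V) : Equiv.Perm V := Q.perm * P.perm

/-- Number of orbits of a permutation (nontrivial cycles plus fixed points). -/
def orbitsCard (σ : Equiv.Perm V) : ℕ :=
  Multiset.card σ.cycleType + (univ.filter fun v => σ v = v).card

/-- Number of odd-size orbits of a permutation. -/
def oddOrbitsCard (σ : Equiv.Perm V) : ℕ :=
  Multiset.card (σ.cycleType.filter fun k => Odd k) +
    (univ.filter fun v => σ v = v).card

/-- `c P Q`: the number of black-gray cycles in the breakpoint graph `G(P,Q)`. -/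
def c (P Q : Genome V) : ℕ := orbitsCard (sigma P Q) / 2

/-- `cOdd P Q`: the number of black-gray cycles with an odd number of black edges. -/
def cOdd (P Q : Genome V) : ℕ := oddOrbitsCard (sigma P Q) / 2

/-- `cEven P Q`: the number of black-gray cycles with an even number of black edges. -/
def cEven (P Q : Genome V) : ℕ := c P Q - cOdd P Q

/-- Change in the number of black-gray cycles (w.r.t. target `Q`) caused by the
rearrangement turning `A` into `B`. -/
def dC (Q A B : Genome V) : ℤ := (c B Q : ℤ) - (c A Q : ℤ)

def dCOdd (Q A B : Genome V) : ℤ := (cOdd B Q : ℤ) - (cOdd A Q : ℤ)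

def dCEven (Q A B : Genome V) : ℤ := (cEven B Q : ℤ) - (cEven A Q : ℤ)

/-- A transformation of `P` into `Q`: a sequence of genomes starting at `P`,
ending at `Q`, each consecutive pair related by a 3-break. -/
structure Transformation (P Q : Genome V) where
  steps : List (Genome V)
  chain : List.Chain Is3Break P steps
  last_eq : (P :: steps).getLast (List.cons_ne_nil _ _) = Q

namespace Transformation

variable {P Q : Genome V}

/-- The individual rearrangements of a transformation, as pairs (before, after). -/
def pairs (t : Transformation P Q) : List (Genome V × Genome V) :=
  (P :: t.steps).zip t.steps

/-- Length (number of rearrangements) of the transformation. -/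
def len (t : Transformation P Q) : ℕ := t.steps.length

/-- Number of 2-breaks in `t`. -/
def n2 (t : Transformation P Q) : ℕ :=
  t.pairs.countP fun r => r.1.changed r.2 == 4

/-- Number of complete 3-breaks in `t`. -/
def n3 (t : Transformation P Q) : ℕ :=
  t.pairs.countP fun r => r.1.changed r.2 == 6

/-- Total number of breakages (changed black edges) made by `t`. -/
def breakages (t : Transformation P Q) : ℕ :=
  (t.pairs.map fun r => r.1.changed r.2 / 2).sum

/-- Weight of a transformation with complete 3-breaks weighted `α`. -/
noncomputable def W (α : ℝ) (t : Transformation P Q) : ℝ := (t.n2 : ℝ) + α * t.n3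

end Transformation

/-- The 3-break distance: minimum length of a transformation. -/
noncomputable def d3 (P Q : Genome V) : ℕ :=
  sInf {m | ∃ t : Transformation P Q, t.len = m}

/-- The 2-break distance: minimum length of a transformation using only 2-breaks. -/
noncomputable def d2 (P Q : Genome V) : ℕ :=
  sInf {m | ∃ t : Transformation P Q,
    (∀ r ∈ t.pairs, Is2Break r.1 r.2) ∧ t.len = m}

/-- A transformation is optimal if it simultaneously has the shortest length and
makes the smallest number of breakages among all transformations from `P` to `Q`. -/
def IsOptimal {P Q : Genome V} (t : Transformation P Q) : Prop :=
  (∀ t' : Transformation P Q, t.len ≤ t'.len) ∧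
  (∀ t' : Transformation P Q, t.breakages ≤ t'.breakages)

/-- The weighted distance `D_α`. -/
noncomputable def Dist (α : ℝ) (P Q : Genome V) : ℝ :=
  sInf {w | ∃ t : Transformation P Q, Transformation.W α t = w}

end Genome

section Aux3Break

open Equiv Equiv.Perm

/-- Pairing lemma: if a finset carries a fixed-point-free involution preserving a
weight `g`, then the total weight is congruent mod 4 to the number of elements of
odd weight. -/
private lemma pair_sum_mod4 {β : Type*} [DecidableEq β] (g : β → ℕ) :
    ∀ F : Finset β, ∀ ι : β → β,
      (∀ a ∈ F, ι a ∈ F) → (∀ a ∈ F, ι (ι a) = a) → (∀ a ∈ F, ι a ≠ a) →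
      (∀ a ∈ F, g (ι a) = g a) →
      (∑ a ∈ F, g a) ≡ (F.filter fun a => Odd (g a)).card [MOD 4] := by
  classical
  intro F
  induction F using Finset.strongInduction with
  | _ F ih =>
    intro ι hmem hinv hne hg
    rcases F.eq_empty_or_nonempty with rfl | ⟨a, ha⟩
    · simp [Nat.ModEq]
    · have hia : ι a ∈ F := hmem a ha
      have hiane : ι a ≠ a := hne a ha
      have hsub : ({a, ι a} : Finset β) ⊆ F := by
        intro x hx
        rcases Finset.mem_insert.mp hx with rfl | hx
        · exact ha
        · rw [Finset.mem_singleton.mp hx]; exact hia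
      have hss : F \ {a, ι a} ⊂ F :=
        Finset.sdiff_ssubset hsub ⟨a, Finset.mem_insert_self _ _⟩
      have hmemF' : ∀ b ∈ F \ {a, ι a}, b ∈ F ∧ b ≠ a ∧ b ≠ ι a := by
        intro b hb
        simp only [Finset.mem_sdiff, Finset.mem_insert, Finset.mem_singleton] at hb
        tauto
      have hmem' : ∀ b ∈ F \ {a, ι a}, ι b ∈ F \ {a, ι a} := by
        intro b hb
        obtain ⟨hbF, hba, hbia⟩ := hmemF' b hb
        simp only [Finset.mem_sdiff, Finset.mem_insert, Finset.mem_singleton]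
        refine ⟨hmem b hbF, ?_⟩
        rintro (hc | hc)
        · apply hbia
          have h2 := congrArg ι hc
          rwa [hinv b hbF] at h2
        · apply hba
          have h2 := congrArg ι hc
          rwa [hinv b hbF, hinv a ha] at h2
      have hsum : (∑ x ∈ F, g x) = (∑ x ∈ F \ {a, ι a}, g x) + 2 * g a := by
        rw [← Finset.sum_sdiff hsub, Finset.sum_pair (Ne.symm hiane), hg a ha]
        ring
      have hfilter : (F.filter fun x => Odd (g x)).card
          = ((F \ {a, ι a}).filter fun x => Odd (g x)).card
            + (if Odd (g a) then 2 else 0) := by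
        have hU : (F \ {a, ι a}) ∪ {a, ι a} = F := Finset.sdiff_union_of_subset hsub
        conv_lhs => rw [← hU]
        rw [Finset.filter_union,
          Finset.card_union_of_disjoint
            (Finset.disjoint_filter_filter Finset.sdiff_disjoint)]
        congr 1
        by_cases hpa : Odd (g a)
        · rw [Finset.filter_true_of_mem, if_pos hpa]
          · exact Finset.card_pair (Ne.symm hiane)
          · intro x hx
            rcases Finset.mem_insert.mp hx with rfl | hx
            · exact hpa
            · rw [Finset.mem_singleton.mp hx, hg a ha]; exact hpa
        · rw [Finset.filter_false_of_mem, if_neg hpa]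
          · exact Finset.card_empty
          · intro x hx
            rcases Finset.mem_insert.mp hx with rfl | hx
            · exact hpa
            · rw [Finset.mem_singleton.mp hx, hg a ha]; exact hpa
      rw [hsum, hfilter]
      refine Nat.ModEq.add
        (ih _ hss ι hmem' (fun b hb => hinv b (hmemF' b hb).1)
          (fun b hb => hne b (hmemF' b hb).1) (fun b hb => hg b (hmemF' b hb).1)) ?_
      by_cases hpa : Odd (g a)
      · obtain ⟨m, hm⟩ := hpa
        rw [if_pos ⟨m, hm⟩]
        show (2 * g a) % 4 = 2 % 4
        omega
      · obtain ⟨m, hm⟩ := Nat.not_odd_iff_even.mp hpa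
        rw [if_neg hpa]
        show (2 * g a) % 4 = 0 % 4
        omega

variable {V : Type*} [Fintype V] [DecidableEq V]

private lemma perm_inv_eq (P : Genome V) : P.perm⁻¹ = P.perm := by
  ext v
  exact P.perm.injective (by rw [show P.perm (P.perm⁻¹ v) = v from Equiv.apply_symm_apply _ _, P.invol])

private lemma perm_mul_self (P : Genome V) : P.perm * P.perm = 1 := by
  ext v
  simp [Equiv.Perm.mul_apply, P.invol v]

private lemma sigma_comm (P Q : Genome V) :
    Genome.sigma P Q * P.perm = P.perm * (Genome.sigma P Q)⁻¹ := by
  show Q.perm * P.perm * P.perm = P.perm * (Q.perm * P.perm)⁻¹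
  rw [mul_inv_rev, perm_inv_eq P, perm_inv_eq Q, mul_assoc, perm_mul_self, mul_one,
    ← mul_assoc, perm_mul_self, one_mul]

private lemma q_eq_sigma_mul (P Q : Genome V) :
    Q.perm = Genome.sigma P Q * P.perm := by
  show Q.perm = Q.perm * P.perm * P.perm
  rw [mul_assoc, perm_mul_self, mul_one]

/-- The conjugation-inversion involution maps cycle factors of `σ(P,Q)` to cycle
factors. -/
private lemma conj_mem_factors (P Q : Genome V) {c : Perm V}
    (hc : c ∈ (Genome.sigma P Q).cycleFactorsFinset) :
    P.perm * c⁻¹ * P.perm ∈ (Genome.sigma P Q).cycleFactorsFinset := by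
  set σ := Genome.sigma P Q with hσdef
  obtain ⟨hcyc, hagree⟩ := Equiv.Perm.mem_cycleFactorsFinset_iff.mp hc
  rw [Equiv.Perm.mem_cycleFactorsFinset_iff]
  constructor
  · have h1 : IsCycle (P.perm * c⁻¹ * P.perm⁻¹) := hcyc.inv.conj
    rwa [perm_inv_eq] at h1
  · intro a ha
    have hmove : (P.perm * c⁻¹ * P.perm) a ≠ a := Equiv.Perm.mem_support.mp ha
    have hb : c⁻¹ (P.perm a) ≠ P.perm a := by
      intro hfix
      apply hmove
      simp only [Equiv.Perm.mul_apply, hfix, P.invol a]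
    have hb' : c (c⁻¹ (P.perm a)) ≠ c⁻¹ (P.perm a) := by
      rw [show c (c⁻¹ (P.perm a)) = P.perm a from Equiv.apply_symm_apply c _]; exact Ne.symm hb
    have hσb' : c (c⁻¹ (P.perm a)) = σ (c⁻¹ (P.perm a)) :=
      hagree _ (Equiv.Perm.mem_support.mpr hb')
    rw [show c (c⁻¹ (P.perm a)) = P.perm a from Equiv.apply_symm_apply c _] at hσb'
    have hkey : σ a = P.perm (σ⁻¹ (P.perm a)) := by
      have h2 : (σ * P.perm) (P.perm a) = (P.perm * σ⁻¹) (P.perm a) := by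
        rw [sigma_comm P Q]
      simpa only [Equiv.Perm.mul_apply, P.invol a] using h2
    show P.perm (c⁻¹ (P.perm a)) = σ a
    rw [hkey]
    exact congrArg P.perm ((Equiv.Perm.inv_eq_iff_eq.mpr hσb').symm)

/-- The conjugation-inversion involution has no fixed cycle factor (this is where
fixed-point-freeness of both matchings enters). -/
private lemma conj_ne_self (P Q : Genome V) {c : Perm V}
    (hc : c ∈ (Genome.sigma P Q).cycleFactorsFinset) :
    P.perm * c⁻¹ * P.perm ≠ c := by
  intro heq
  set σ := Genome.sigma P Q with hσdef
  obtain ⟨hcyc, hagree⟩ := Equiv.Perm.mem_cycleFactorsFinset_iff.mp hc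
  obtain ⟨v, hv, -⟩ := id hcyc
  have hpcp : P.perm * (c * P.perm) = c⁻¹ := by
    have h2 := congrArg (fun x : Perm V => x⁻¹) heq
    simp only [mul_inv_rev, inv_inv, perm_inv_eq, mul_assoc] at h2
    exact h2
  have hz : ∀ i : ℤ, P.perm * c ^ i * P.perm = c ^ (-i) := by
    intro i
    have h3 : (P.perm * c * P.perm⁻¹) ^ i = P.perm * c ^ i * P.perm⁻¹ := conj_zpow
    rw [perm_inv_eq] at h3
    rw [← h3, mul_assoc, hpcp, inv_zpow, zpow_neg]
  have hpv : c (P.perm v) ≠ P.perm v := by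
    intro hfix
    have h4 : c (P.perm v) = P.perm (c⁻¹ v) := by
      have h9 := congrArg (fun f : Perm V => f (P.perm v)) heq
      simp only [Equiv.Perm.mul_apply, P.invol] at h9
      exact h9.symm
    rw [h4] at hfix
    have h5 : c⁻¹ v = v := P.perm.injective hfix
    have h6 : c v = v := by
      calc c v = c (c⁻¹ v) := by rw [h5]
        _ = v := Equiv.apply_symm_apply c v
    exact hv h6
  obtain ⟨j, hj⟩ := hcyc.exists_zpow_eq hv hpv
  have happ : ∀ i : ℤ, P.perm ((c ^ i) v) = (c ^ (j - i)) v := by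
    intro i
    have h6 : P.perm * c ^ i = c ^ (-i) * P.perm := by
      calc P.perm * c ^ i
          = (P.perm * c ^ i * P.perm) * P.perm := by
            rw [mul_assoc, perm_mul_self, mul_one]
        _ = c ^ (-i) * P.perm := by rw [hz i]
    have h7 : P.perm ((c ^ i) v) = (c ^ (-i)) (P.perm v) := by
      have h8 : (P.perm * c ^ i) v = (c ^ (-i) * P.perm) v := by rw [h6]
      simpa only [Equiv.Perm.mul_apply] using h8
    rw [h7, ← hj, ← Equiv.Perm.mul_apply, ← zpow_add]
    rw [show -i + j = j - i from by ring]
  rcases Int.even_or_odd j with ⟨i, hi⟩ | ⟨i, hi⟩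
  · refine P.noFix ((c ^ i) v) ?_
    rw [happ i, hi, show i + i - i = i from by ring]
  · refine Q.noFix ((c ^ (i + 1)) v) ?_
    rw [q_eq_sigma_mul P Q, ← hσdef, Equiv.Perm.mul_apply, happ (i + 1)]
    have hsupp : (c ^ (j - (i + 1))) v ∈ c.support :=
      Equiv.Perm.zpow_apply_mem_support.mpr (Equiv.Perm.mem_support.mpr hv)
    rw [← hagree _ hsupp, ← Equiv.Perm.mul_apply, ← zpow_one_add]
    rw [show 1 + (j - (i + 1)) = i + 1 from by omega]

private lemma oddOrbits_factors (σ : Perm V) :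
    Genome.oddOrbitsCard σ =
      (σ.cycleFactorsFinset.filter fun c => Odd c.support.card).card +
        (univ.filter fun v => σ v = v).card := by
  unfold Genome.oddOrbitsCard
  congr 1
  rw [Equiv.Perm.cycleType_def, Multiset.filter_map, Multiset.card_map]
  rfl

/-- KEY: for any two genomes, the number of odd orbits of `σ(P,Q)` is congruent
to `|V|` mod 4. -/
private lemma key_mod4 (P Q : Genome V) :
    Genome.oddOrbitsCard (Genome.sigma P Q) % 4 = Fintype.card V % 4 := by
  set σ := Genome.sigma P Q with hσdef
  have hpair := pair_sum_mod4 (fun c : Perm V => c.support.card)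
      σ.cycleFactorsFinset (fun c => P.perm * c⁻¹ * P.perm)
      (fun c hc => conj_mem_factors P Q hc)
      (fun c _ => by
        show P.perm * (P.perm * c⁻¹ * P.perm)⁻¹ * P.perm = c
        rw [mul_inv_rev, mul_inv_rev, perm_inv_eq, inv_inv]
        rw [show P.perm * (P.perm * (c * P.perm)) * P.perm = c from by
          rw [← mul_assoc, ← mul_assoc, perm_mul_self, one_mul, mul_assoc,
            perm_mul_self, mul_one]])
      (fun c hc => conj_ne_self P Q hc)
      (fun c _ => by
        show (P.perm * c⁻¹ * P.perm).support.card = c.support.card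
        have h1 : P.perm * c⁻¹ * P.perm = P.perm * c⁻¹ * P.perm⁻¹ := by
          rw [perm_inv_eq]
        rw [h1, Equiv.Perm.support_conj]
        simp)
  have hsum : (∑ c ∈ σ.cycleFactorsFinset, c.support.card) = σ.support.card := by
    rw [← Equiv.Perm.sum_cycleType, Equiv.Perm.cycleType_def]
    rfl
  have hsupp : σ.support.card = (univ.filter fun v => ¬ σ v = v).card := by
    rw [show σ.support = univ.filter (fun v => ¬ σ v = v) from by
      ext v; simp [Equiv.Perm.mem_support]]
  have hsplit := Finset.card_filter_add_card_filter_not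
      (s := (univ : Finset V)) (p := fun v => σ v = v)
  have hcard : (univ : Finset V).card = Fintype.card V := Finset.card_univ
  have hmod : (∑ c ∈ σ.cycleFactorsFinset, c.support.card) % 4
      = (σ.cycleFactorsFinset.filter fun c => Odd c.support.card).card % 4 := hpair
  rw [oddOrbits_factors σ]
  omega

/-- Locality: if two permutations agree off `S`, their odd-orbit counts differ by
at most `|S|`. -/
private lemma oddOrbits_le (σ σ' : Perm V) (S : Finset V)
    (hagree : ∀ v, v ∉ S → σ v = σ' v) :
    Genome.oddOrbitsCard σ ≤ Genome.oddOrbitsCard σ' + S.card := by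
  classical
  rw [oddOrbits_factors σ, oddOrbits_factors σ']
  set p : Perm V → Prop := fun c => (c.support ∩ S).Nonempty with hp
  have htrans : ∀ c ∈ σ.cycleFactorsFinset, ¬ p c → c ∈ σ'.cycleFactorsFinset := by
    intro c hcmem hnp
    obtain ⟨hcyc, hagr⟩ := Equiv.Perm.mem_cycleFactorsFinset_iff.mp hcmem
    refine Equiv.Perm.mem_cycleFactorsFinset_iff.mpr ⟨hcyc, ?_⟩
    intro a ha
    have haS : a ∉ S := fun haS => hnp ⟨a, Finset.mem_inter.mpr ⟨ha, haS⟩⟩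
    rw [hagr a ha, hagree a haS]
  have hsplitF := Finset.card_filter_add_card_filter_not
      (s := σ.cycleFactorsFinset.filter fun c => Odd c.support.card) (p := p)
  have hsplitX := Finset.card_filter_add_card_filter_not
      (s := univ.filter fun v => σ v = v) (p := fun v => v ∈ S)
  have h1 : (((σ.cycleFactorsFinset.filter fun c => Odd c.support.card)).filter
        fun c => ¬ p c).card
      ≤ (σ'.cycleFactorsFinset.filter fun c => Odd c.support.card).card := by
    apply Finset.card_le_card
    intro c hcmem
    simp only [Finset.mem_filter] at hcmem ⊢
    exact ⟨htrans c hcmem.1.1 hcmem.2, hcmem.1.2⟩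
  have h2 : (((univ.filter fun v => σ v = v)).filter fun v => ¬ v ∈ S).card
      ≤ (univ.filter fun v => σ' v = v).card := by
    apply Finset.card_le_card
    intro v hvmem
    simp only [Finset.mem_filter, Finset.mem_univ, true_and] at hvmem ⊢
    rw [← hagree v hvmem.2]; exact hvmem.1
  have h3 : (((σ.cycleFactorsFinset.filter fun c => Odd c.support.card)).filter p).card
        + ((univ.filter fun v => σ v = v).filter fun v => v ∈ S).card ≤ S.card := by
    set M := σ.cycleFactorsFinset.filter p with hM
    have hsub1 : ((σ.cycleFactorsFinset.filter fun c => Odd c.support.card)).filter p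
        ⊆ M := by
      intro c hcm
      simp only [Finset.mem_filter, hM] at hcm ⊢
      exact ⟨hcm.1.1, hcm.2⟩
    have hMcard : M.card ≤ (S.filter fun v => ¬ σ v = v).card := by
      have hdisj : ∀ x ∈ M, ∀ y ∈ M, x ≠ y →
          Disjoint (x.support ∩ S) (y.support ∩ S) := by
        intro x hx y hy hxy
        have hdx := Equiv.Perm.cycleFactorsFinset_pairwise_disjoint σ
          (Finset.mem_coe.mpr (Finset.mem_filter.mp hx).1)
          (Finset.mem_coe.mpr (Finset.mem_filter.mp hy).1) hxy
        exact (hdx.disjoint_support).mono Finset.inter_subset_left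
          Finset.inter_subset_left
      have hbiU : M.card ≤ (M.biUnion fun c => c.support ∩ S).card := by
        rw [Finset.card_biUnion hdisj]
        calc M.card = ∑ _c ∈ M, 1 := by simp
          _ ≤ ∑ c ∈ M, (c.support ∩ S).card := by
              apply Finset.sum_le_sum
              intro c hcm
              exact Finset.card_pos.mpr (Finset.mem_filter.mp hcm).2
      have hsubU : (M.biUnion fun c => c.support ∩ S)
          ⊆ S.filter fun v => ¬ σ v = v := by
        intro v hv
        obtain ⟨c, hcM, hvc⟩ := Finset.mem_biUnion.mp hv
        obtain ⟨hvs, hvS⟩ := Finset.mem_inter.mp hvc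
        have hcF : c ∈ σ.cycleFactorsFinset := (Finset.mem_filter.mp hcM).1
        have hvsupp : v ∈ σ.support :=
          Equiv.Perm.mem_cycleFactorsFinset_support_le hcF hvs
        exact Finset.mem_filter.mpr ⟨hvS, Equiv.Perm.mem_support.mp hvsupp⟩
      exact le_trans hbiU (Finset.card_le_card hsubU)
    have hfixeq : ((univ.filter fun v => σ v = v).filter fun v => v ∈ S)
        = S.filter fun v => σ v = v := by
      ext v
      simp only [Finset.mem_filter, Finset.mem_univ, true_and]
      tauto
    have hSsplit := Finset.card_filter_add_card_filter_not
        (s := S) (p := fun v => σ v = v)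
    have hc1 := Finset.card_le_card hsub1
    rw [hfixeq]
    omega
  omega

end Aux3Break

open Genome in
/-- for any 3-break, the change in the number of odd black-gray
cycles is even and has absolute value at most 2. -/
theorem stmt1 {V : Type*} [Fintype V] [DecidableEq V] (Q A B : Genome V)
    (h : Is3Break A B) :
    Even (dCOdd Q A B) ∧ |dCOdd Q A B| ≤ 2 := by
  classical
  set S : Finset V := univ.filter (fun v => A.perm v ≠ B.perm v) with hS
  have hScard : S.card ≤ 6 := by
    have hch : Genome.changed A B = 4 ∨ Genome.changed A B = 6 := h
    have hSeq : S.card = Genome.changed A B := rfl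
    omega
  have hagree1 : ∀ v, v ∉ S → Genome.sigma A Q v = Genome.sigma B Q v := by
    intro v hv
    have hAB : A.perm v = B.perm v := by
      by_contra hne
      exact hv (Finset.mem_filter.mpr ⟨Finset.mem_univ v, hne⟩)
    show (Q.perm * A.perm) v = (Q.perm * B.perm) v
    simp [Equiv.Perm.mul_apply, hAB]
  have hagree2 : ∀ v, v ∉ S → Genome.sigma B Q v = Genome.sigma A Q v :=
    fun v hv => (hagree1 v hv).symm
  have hb1 := oddOrbits_le (Genome.sigma A Q) (Genome.sigma B Q) S hagree1
  have hb2 := oddOrbits_le (Genome.sigma B Q) (Genome.sigma A Q) S hagree2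
  have hk1 : Genome.oddOrbitsCard (Genome.sigma A Q) % 4 = Fintype.card V % 4 :=
    key_mod4 A Q
  have hk2 : Genome.oddOrbitsCard (Genome.sigma B Q) % 4 = Fintype.card V % 4 :=
    key_mod4 B Q
  have hV : Fintype.card V % 2 = 0 := by
    have hpair := pair_sum_mod4 (fun _ : V => 2) univ A.perm
      (fun a _ => Finset.mem_univ _) (fun a _ => A.invol a)
      (fun a _ => A.noFix a) (fun a _ => rfl)
    have h2 : (∑ _a : V, (2 : ℕ)) = 2 * Fintype.card V := by
      rw [Finset.sum_const, smul_eq_mul, Finset.card_univ]; ring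
    have h3 : ((univ : Finset V).filter fun _a => Odd 2).card = 0 := by
      rw [Finset.filter_false_of_mem]
      · exact Finset.card_empty
      · intro x _
        decide
    have h4 : (2 * Fintype.card V) % 4 = 0 % 4 := by
      rw [← h2, ← h3]; exact hpair
    omega
  have hdef : Genome.dCOdd Q A B
      = ((Genome.oddOrbitsCard (Genome.sigma B Q) / 2 : ℕ) : ℤ)
        - ((Genome.oddOrbitsCard (Genome.sigma A Q) / 2 : ℕ) : ℤ) := rfl
  constructor
  · rw [hdef, Int.even_iff]
    omega
  · rw [hdef, abs_le]
    constructor <;> omega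
end

section
/- For α ≥ 2, replacing any complete 3-break in a transformation by two suitable 2-breaks yields a valid transformation whose weight W_α does not increase (strictly decreases when α > 2); consequently, for every pair of genomes P, Q there is a minimum-weight transformation under W_α consisting only of 2-breaks, and D_α(P,Q) = D_2 restricted to 2-breaks equals |P| − c(P,Q) + (α−2)·0, i.e., D_α(P,Q) = d_2(P,Q) for α ≥ 2. -/
open Finset

namespace Genome

variable {V : Type*} [Fintype V] [DecidableEq V]

lemma eq_of_perm_eq {P Q : Genome V} (h : P.perm = Q.perm) : P = Q := by
  cases P; cases Q; cases h; rfl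

lemma apply_mem {A B : Genome V} {v : V} (h : A.perm v ≠ B.perm v) :
    A.perm (A.perm v) ≠ B.perm (A.perm v) := by
  rw [A.invol]
  intro hv
  apply h
  have h2 := congrArg B.perm hv
  rw [B.invol] at h2
  exact h2.symm

lemma split3 {A B : Genome V} (h : IsComplete3Break A B) :
    ∃ C : Genome V, Is2Break A C ∧ Is2Break C B := by
  classical
  set S : Finset V := univ.filter (fun v => A.perm v ≠ B.perm v) with hS
  have hScard : S.card = 6 := h
  have hmemS : ∀ v, v ∈ S ↔ A.perm v ≠ B.perm v := by intro v; simp [hS]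
  have hSA : ∀ v ∈ S, A.perm v ∈ S := by
    intro v hv; rw [hmemS] at *; exact apply_mem hv
  have hSB : ∀ v ∈ S, B.perm v ∈ S := by
    intro v hv; rw [hmemS] at *
    exact fun hh => apply_mem (A := B) (B := A) (Ne.symm hv) hh.symm
  have hSne : S.Nonempty := Finset.card_pos.mp (by rw [hScard]; norm_num)
  obtain ⟨v1, hm1⟩ := hSne
  set v2 := A.perm v1 with hv2
  set v3 := B.perm v2 with hv3
  set v4 := A.perm v3 with hv4
  set v5 := B.perm v4 with hv5
  set v6 := A.perm v5 with hv6
  have hm2 : v2 ∈ S := by rw [hv2]; exact hSA _ hm1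
  have hm3 : v3 ∈ S := by rw [hv3]; exact hSB _ hm2
  have hm4 : v4 ∈ S := by rw [hv4]; exact hSA _ hm3
  have hm5 : v5 ∈ S := by rw [hv5]; exact hSB _ hm4
  have hm6 : v6 ∈ S := by rw [hv6]; exact hSA _ hm5
  have ha2 : A.perm v2 = v1 := by rw [hv2, A.invol]
  have hb3 : B.perm v3 = v2 := by rw [hv3, B.invol]
  have ha4 : A.perm v4 = v3 := by rw [hv4, A.invol]
  have hb5 : B.perm v5 = v4 := by rw [hv5, B.invol]
  have ha6 : A.perm v6 = v5 := by rw [hv6, A.invol]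
  have h21 : v2 ≠ v1 := by rw [hv2]; exact A.noFix v1
  have h32 : v3 ≠ v2 := by rw [hv3]; exact B.noFix v2
  have h31 : v3 ≠ v1 := by
    intro e
    have h2 : B.perm v1 = v2 := by rw [← e, hb3]
    exact (hmemS v1).1 hm1 (hv2.symm.trans h2.symm)
  have h43 : v4 ≠ v3 := by rw [hv4]; exact A.noFix v3
  have h42 : v4 ≠ v2 := by
    rw [hv4, hv2]; exact fun e => h31 (A.perm.injective e)
  have h41 : v4 ≠ v1 := by
    intro e
    have h2 := congrArg A.perm e
    rw [ha4, ← hv2] at h2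
    exact h32 h2
  have h51 : v5 ≠ v1 := by
    intro e
    have hb41 : B.perm v4 = v1 := by rw [← hv5, e]
    have hb1 : B.perm v1 = v4 := by rw [← hb41, B.invol]
    set T : Finset V := {v1, v2, v3, v4} with hT
    have hTsub : T ⊆ S := by
      intro x hx
      rw [hT] at hx
      simp only [Finset.mem_insert, Finset.mem_singleton] at hx
      rcases hx with rfl|rfl|rfl|rfl <;> assumption
    have hTcard : T.card = 4 := by
      rw [hT, Finset.card_insert_of_notMem (by simp [Ne.symm h21, Ne.symm h31, Ne.symm h41]),
          Finset.card_insert_of_notMem (by simp [Ne.symm h32, Ne.symm h42]),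
          Finset.card_insert_of_notMem (by simp [Ne.symm h43]), Finset.card_singleton]
    have hS'card : (S \ T).card = 2 := by
      rw [Finset.card_sdiff_of_subset hTsub, hScard, hTcard]
    obtain ⟨w, hw⟩ : (S \ T).Nonempty := Finset.card_pos.mp (by rw [hS'card]; norm_num)
    have hwS : w ∈ S := (Finset.mem_sdiff.mp hw).1
    have hwT : w ∉ T := (Finset.mem_sdiff.mp hw).2
    have hwv1 : w ≠ v1 := fun e => hwT (by rw [hT, e]; simp)
    have hwv2 : w ≠ v2 := fun e => hwT (by rw [hT, e]; simp)
    have hwv3 : w ≠ v3 := fun e => hwT (by rw [hT, e]; simp)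
    have hwv4 : w ≠ v4 := fun e => hwT (by rw [hT, e]; simp)
    have hAw : A.perm w ∈ S \ T := by
      rw [Finset.mem_sdiff]
      refine ⟨hSA _ hwS, fun hx => ?_⟩
      rw [hT] at hx
      simp only [Finset.mem_insert, Finset.mem_singleton] at hx
      rcases hx with e|e|e|e
      · exact hwv2 (by have := congrArg A.perm e; rwa [A.invol, ← hv2] at this)
      · exact hwv1 (by have := congrArg A.perm e; rwa [A.invol, ha2] at this)
      · exact hwv4 (by have := congrArg A.perm e; rwa [A.invol, ← hv4] at this)
      · exact hwv3 (by have := congrArg A.perm e; rwa [A.invol, ha4] at this)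
    have hBw : B.perm w ∈ S \ T := by
      rw [Finset.mem_sdiff]
      refine ⟨hSB _ hwS, fun hx => ?_⟩
      rw [hT] at hx
      simp only [Finset.mem_insert, Finset.mem_singleton] at hx
      rcases hx with e|e|e|e
      · exact hwv4 (by have := congrArg B.perm e; rwa [B.invol, hb1] at this)
      · exact hwv3 (by have := congrArg B.perm e; rwa [B.invol, ← hv3] at this)
      · exact hwv2 (by have := congrArg B.perm e; rwa [B.invol, hb3] at this)
      · exact hwv1 (by have := congrArg B.perm e; rwa [B.invol, hb41] at this)
    have hcard1 : ((S \ T).erase w).card = 1 := by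
      rw [Finset.card_erase_of_mem hw, hS'card]
    obtain ⟨x, hx⟩ := Finset.card_eq_one.mp hcard1
    have hAw' : A.perm w ∈ (S \ T).erase w := Finset.mem_erase.2 ⟨A.noFix w, hAw⟩
    have hBw' : B.perm w ∈ (S \ T).erase w := Finset.mem_erase.2 ⟨B.noFix w, hBw⟩
    rw [hx, Finset.mem_singleton] at hAw' hBw'
    exact (hmemS w).1 hwS (hAw'.trans hBw'.symm)
  have h52 : v5 ≠ v2 := by
    intro e
    have h2 := congrArg B.perm e
    rw [hv5, B.invol, ← hv3] at h2
    exact h43 h2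
  have h53 : v5 ≠ v3 := by
    rw [hv5, hv3]; exact fun e => h42 (B.perm.injective e)
  have h54 : v5 ≠ v4 := by rw [hv5]; exact B.noFix v4
  have h65 : v6 ≠ v5 := by rw [hv6]; exact A.noFix v5
  have h64 : v6 ≠ v4 := by
    rw [hv6, hv4]; exact fun e => h53 (A.perm.injective e)
  have h63 : v6 ≠ v3 := by
    intro e
    have h2 := congrArg A.perm e
    rw [ha6, ← hv4] at h2
    exact h54 h2
  have h62 : v6 ≠ v2 := by
    rw [hv6, hv2]; exact fun e => h51 (A.perm.injective e)
  have h61 : v6 ≠ v1 := by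
    intro e
    have h2 := congrArg A.perm e
    rw [ha6, ← hv2] at h2
    exact h52 h2
  have hsetcard : ({v1, v2, v3, v4, v5, v6} : Finset V).card = 6 := by
    rw [Finset.card_insert_of_notMem (by simp [Ne.symm h21, Ne.symm h31, Ne.symm h41, Ne.symm h51, Ne.symm h61]),
        Finset.card_insert_of_notMem (by simp [Ne.symm h32, Ne.symm h42, Ne.symm h52, Ne.symm h62]),
        Finset.card_insert_of_notMem (by simp [Ne.symm h43, Ne.symm h53, Ne.symm h63]),
        Finset.card_insert_of_notMem (by simp [Ne.symm h54, Ne.symm h64]),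
        Finset.card_insert_of_notMem (by simp [Ne.symm h65]), Finset.card_singleton]
  have hSet : S = {v1, v2, v3, v4, v5, v6} := by
    refine (Finset.eq_of_subset_of_card_le ?_ ?_).symm
    · intro x hx
      simp only [Finset.mem_insert, Finset.mem_singleton] at hx
      rcases hx with rfl|rfl|rfl|rfl|rfl|rfl <;> assumption
    · rw [hScard, hsetcard]
  have hb61 : B.perm v6 = v1 := by
    have hmem : B.perm v6 ∈ S := hSB _ hm6
    rw [hSet] at hmem
    simp only [Finset.mem_insert, Finset.mem_singleton] at hmem
    rcases hmem with e|e|e|e|e|e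
    · exact e
    · exfalso; have := congrArg B.perm e; rw [B.invol, ← hv3] at this; exact h63 this
    · exfalso; have := congrArg B.perm e; rw [B.invol, hb3] at this; exact h62 this
    · exfalso; have := congrArg B.perm e; rw [B.invol, ← hv5] at this; exact h65 this
    · exfalso; have := congrArg B.perm e; rw [B.invol, hb5] at this; exact h64 this
    · exact absurd e (B.noFix v6)
  have hb6 : B.perm v1 = v6 := by rw [← hb61, B.invol]
  set s := Equiv.swap v4 v6 with hs
  have hs4 : s v4 = v6 := Equiv.swap_apply_left v4 v6
  have hs6 : s v6 = v4 := Equiv.swap_apply_right v4 v6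
  have hsother : ∀ x, x ≠ v4 → x ≠ v6 → s x = x :=
    fun x e1 e2 => Equiv.swap_apply_of_ne_of_ne e1 e2
  have hinv : ∀ v, (s * A.perm * s) ((s * A.perm * s) v) = v := by
    intro v
    simp [hs, Equiv.Perm.mul_apply, Equiv.swap_apply_self, A.invol]
  have hnf : ∀ v, (s * A.perm * s) v ≠ v := by
    intro v hv
    simp only [Equiv.Perm.mul_apply] at hv
    have h2 := congrArg s hv
    rw [hs, Equiv.swap_apply_self] at h2
    exact A.noFix _ h2
  have key1 : ∀ v, v ≠ v3 → v ≠ v4 → v ≠ v5 → v ≠ v6 → (s * A.perm * s) v = A.perm v := by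
    intro v e3 e4 e5 e6
    have hA4 : A.perm v ≠ v4 := fun e => e3 (by have := congrArg A.perm e; rwa [A.invol, ha4] at this)
    have hA6 : A.perm v ≠ v6 := fun e => e5 (by have := congrArg A.perm e; rwa [A.invol, ha6] at this)
    simp only [Equiv.Perm.mul_apply, hsother v e4 e6, hsother _ hA4 hA6]
  have cv3 : (s * A.perm * s) v3 = v6 := by
    rw [Equiv.Perm.mul_apply, Equiv.Perm.mul_apply, hsother v3 (Ne.symm h43) (Ne.symm h63), ← hv4, hs4]
  have cv4 : (s * A.perm * s) v4 = v5 := by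
    rw [Equiv.Perm.mul_apply, Equiv.Perm.mul_apply, hs4, ha6, hsother v5 h54 (Ne.symm h65)]
  have cv5 : (s * A.perm * s) v5 = v4 := by
    rw [Equiv.Perm.mul_apply, Equiv.Perm.mul_apply, hsother v5 h54 (Ne.symm h65), ← hv6, hs6]
  have cv6 : (s * A.perm * s) v6 = v3 := by
    rw [Equiv.Perm.mul_apply, Equiv.Perm.mul_apply, hs6, ha4, hsother v3 (Ne.symm h43) (Ne.symm h63)]
  have cv1 : (s * A.perm * s) v1 = v2 := by
    rw [key1 v1 (Ne.symm h31) (Ne.symm h41) (Ne.symm h51) (Ne.symm h61)]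
  have cv2 : (s * A.perm * s) v2 = v1 := by
    rw [key1 v2 (Ne.symm h32) (Ne.symm h42) (Ne.symm h52) (Ne.symm h62)]; exact ha2
  refine ⟨⟨s * A.perm * s, hinv, hnf⟩, ?_, ?_⟩
  · show (univ.filter fun v => A.perm v ≠ (s * A.perm * s) v).card = 4
    have hfil : (univ.filter fun v => A.perm v ≠ (s * A.perm * s) v) = {v3, v4, v5, v6} := by
      ext v
      simp only [Finset.mem_filter, Finset.mem_univ, true_and, Finset.mem_insert,
        Finset.mem_singleton]
      constructor
      · intro hv
        by_contra hc
        push_neg at hc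
        exact hv (key1 v hc.1 hc.2.1 hc.2.2.1 hc.2.2.2).symm
      · rintro (rfl|rfl|rfl|rfl)
        · rw [cv3, ← hv4]; exact Ne.symm h64
        · rw [cv4, ha4]; exact Ne.symm h53
        · rw [cv5, ← hv6]; exact h64
        · rw [cv6, ha6]; exact h53
    rw [hfil, Finset.card_insert_of_notMem (by simp [Ne.symm h43, Ne.symm h53, Ne.symm h63]),
        Finset.card_insert_of_notMem (by simp [Ne.symm h54, Ne.symm h64]),
        Finset.card_insert_of_notMem (by simp [Ne.symm h65]), Finset.card_singleton]
  · show (univ.filter fun v => (s * A.perm * s) v ≠ B.perm v).card = 4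
    have hfil : (univ.filter fun v => (s * A.perm * s) v ≠ B.perm v) = {v1, v2, v3, v6} := by
      ext v
      simp only [Finset.mem_filter, Finset.mem_univ, true_and, Finset.mem_insert,
        Finset.mem_singleton]
      constructor
      · intro hv
        by_contra hc
        push_neg at hc
        obtain ⟨e1, e2, e3, e6⟩ := hc
        by_cases e4 : v = v4
        · subst e4; exact hv (cv4.trans hv5)
        by_cases e5 : v = v5
        · subst e5; exact hv (cv5.trans hb5.symm)
        have hvS : v ∉ S := by
          rw [hSet]
          simp only [Finset.mem_insert, Finset.mem_singleton]
          push_neg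
          exact ⟨e1, e2, e3, e4, e5, e6⟩
        have hAB : A.perm v = B.perm v := by
          by_contra hne
          exact hvS ((hmemS v).2 hne)
        exact hv ((key1 v e3 e4 e5 e6).trans hAB)
      · rintro (rfl|rfl|rfl|rfl)
        · rw [cv1, hb6]; exact Ne.symm h62
        · rw [cv2, ← hv3]; exact Ne.symm h31
        · rw [cv3, hb3]; exact h62
        · rw [cv6, hb61]; exact h31
    rw [hfil, Finset.card_insert_of_notMem (by simp [Ne.symm h21, Ne.symm h31, Ne.symm h61]),
        Finset.card_insert_of_notMem (by simp [Ne.symm h32, Ne.symm h62]),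
        Finset.card_insert_of_notMem (by simp [Ne.symm h63]), Finset.card_singleton]
lemma exists_twoBreak_step {P Q : Genome V} (h : P ≠ Q) :
    ∃ P' : Genome V, Is2Break P P' ∧ changed P' Q < changed P Q := by
  classical
  have hex : ∃ v, P.perm v ≠ Q.perm v := by
    by_contra hc
    push_neg at hc
    exact h (eq_of_perm_eq (Equiv.ext hc))
  obtain ⟨v, hv⟩ := hex
  obtain ⟨w, hw⟩ : ∃ w, w = Q.perm v := ⟨_, rfl⟩
  have hQv : Q.perm v = w := hw.symm
  have hQw : Q.perm w = v := by rw [hw, Q.invol]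
  have hwv : w ≠ v := by rw [hw]; exact Q.noFix v
  have hPv : P.perm v ≠ v := P.noFix v
  have hwPv : w ≠ P.perm v := by rw [hw]; exact fun e => hv e.symm
  have hvPw : v ≠ P.perm w := by
    intro e
    have := congrArg P.perm e
    rw [P.invol] at this
    exact hwPv this.symm
  have hPvPw : P.perm v ≠ P.perm w := fun e => hwv (P.perm.injective e).symm
  have hPww : P.perm w ≠ w := P.noFix w
  set s := Equiv.swap w (P.perm v) with hs
  have hsw : s w = P.perm v := Equiv.swap_apply_left _ _
  have hsPv : s (P.perm v) = w := Equiv.swap_apply_right _ _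
  have hsother : ∀ x, x ≠ w → x ≠ P.perm v → s x = x :=
    fun x e1 e2 => Equiv.swap_apply_of_ne_of_ne e1 e2
  have hinv : ∀ u, (s * P.perm * s) ((s * P.perm * s) u) = u := by
    intro u
    simp [hs, Equiv.Perm.mul_apply, Equiv.swap_apply_self, P.invol]
  have hnf : ∀ u, (s * P.perm * s) u ≠ u := by
    intro u hu
    simp only [Equiv.Perm.mul_apply] at hu
    have h2 := congrArg s hu
    rw [hs, Equiv.swap_apply_self] at h2
    exact P.noFix _ h2
  have key1 : ∀ u, u ≠ v → u ≠ w → u ≠ P.perm v → u ≠ P.perm w →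
      (s * P.perm * s) u = P.perm u := by
    intro u e1 e2 e3 e4
    have hu1 : P.perm u ≠ w := fun e => e4 (by have := congrArg P.perm e; rwa [P.invol] at this)
    have hu2 : P.perm u ≠ P.perm v := fun e => e1 (P.perm.injective e)
    simp only [Equiv.Perm.mul_apply, hsother u e2 e3, hsother _ hu1 hu2]
  have cv : (s * P.perm * s) v = w := by
    rw [Equiv.Perm.mul_apply, Equiv.Perm.mul_apply, hsother v (Ne.symm hwv) (Ne.symm hPv), hsPv]
  have cw : (s * P.perm * s) w = v := by
    rw [Equiv.Perm.mul_apply, Equiv.Perm.mul_apply, hsw, P.invol,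
        hsother v (Ne.symm hwv) (Ne.symm hPv)]
  have cPv : (s * P.perm * s) (P.perm v) = P.perm w := by
    rw [Equiv.Perm.mul_apply, Equiv.Perm.mul_apply, hsPv,
        hsother (P.perm w) hPww (Ne.symm hPvPw)]
  have cPw : (s * P.perm * s) (P.perm w) = P.perm v := by
    rw [Equiv.Perm.mul_apply, Equiv.Perm.mul_apply,
        hsother (P.perm w) hPww (Ne.symm hPvPw), P.invol, hsw]
  refine ⟨⟨s * P.perm * s, hinv, hnf⟩, ?_, ?_⟩
  · show (univ.filter fun u => P.perm u ≠ (s * P.perm * s) u).card = 4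
    have hfil : (univ.filter fun u => P.perm u ≠ (s * P.perm * s) u)
        = {v, w, P.perm v, P.perm w} := by
      ext u
      simp only [Finset.mem_filter, Finset.mem_univ, true_and, Finset.mem_insert,
        Finset.mem_singleton]
      constructor
      · intro hu
        by_contra hc
        push_neg at hc
        exact hu (key1 u hc.1 hc.2.1 hc.2.2.1 hc.2.2.2).symm
      · rintro (rfl|rfl|rfl|rfl)
        · rw [cv]; exact Ne.symm hwPv
        · rw [cw]; exact Ne.symm hvPw
        · rw [cPv, P.invol]; exact hvPw
        · rw [cPw, P.invol]; exact hwPv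
    rw [hfil,
        Finset.card_insert_of_notMem (by simp [Ne.symm hwv, Ne.symm hPv, hvPw]),
        Finset.card_insert_of_notMem (by simp [hwPv, Ne.symm hPww]),
        Finset.card_insert_of_notMem (by simp [hPvPw]), Finset.card_singleton]
  · show (univ.filter fun u => (s * P.perm * s) u ≠ Q.perm u).card
        < (univ.filter fun u => P.perm u ≠ Q.perm u).card
    have hvmem : v ∈ (univ.filter fun u => P.perm u ≠ Q.perm u) := by
      simp only [Finset.mem_filter, Finset.mem_univ, true_and]; exact hv
    have hsub : (univ.filter fun u => (s * P.perm * s) u ≠ Q.perm u)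
        ⊆ (univ.filter fun u => P.perm u ≠ Q.perm u).erase v := by
      intro u hu
      simp only [Finset.mem_filter, Finset.mem_univ, true_and] at hu
      rw [Finset.mem_erase]
      have hne : u ≠ v := by
        rintro rfl
        exact hu (cv.trans hw)
      refine ⟨hne, ?_⟩
      simp only [Finset.mem_filter, Finset.mem_univ, true_and]
      by_cases e2 : u = w
      · subst e2; exact absurd (cw.trans hQw.symm) hu
      by_cases e3 : u = P.perm v
      · subst e3
        rw [P.invol]
        intro eq
        have h2 := congrArg Q.perm eq
        rw [Q.invol] at h2
        exact hwPv (hQv.symm.trans h2)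
      by_cases e4 : u = P.perm w
      · subst e4
        rw [P.invol]
        intro eq
        have h2 := congrArg Q.perm eq
        rw [Q.invol] at h2
        exact hvPw (hQw.symm.trans h2)
      · intro eq
        exact hu ((key1 u hne e2 e3 e4).trans eq)
    calc (univ.filter fun u => (s * P.perm * s) u ≠ Q.perm u).card
        ≤ ((univ.filter fun u => P.perm u ≠ Q.perm u).erase v).card :=
          Finset.card_le_card hsub
      _ < (univ.filter fun u => P.perm u ≠ Q.perm u).card := by
          rw [Finset.card_erase_of_mem hvmem]
          exact Nat.sub_lt (Finset.card_pos.mpr ⟨v, hvmem⟩) one_pos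
lemma chain_pairs : ∀ (l : List (Genome V)) (P : Genome V), List.Chain Is3Break P l →
    ∀ r ∈ (P :: l).zip l, Is3Break r.1 r.2
  | [], _, _, r, hr => by simp at hr
  | b :: l, P, hc, r, hr => by
    unfold List.Chain at hc
    rw [List.isChain_cons_cons] at hc
    rw [List.zip_cons_cons, List.mem_cons] at hr
    rcases hr with rfl | hr
    · exact hc.1
    · exact chain_pairs l b hc.2 r hr

lemma exists_all2 (P Q : Genome V) :
    ∃ t : Transformation P Q, ∀ r ∈ t.pairs, Is2Break r.1 r.2 := by
  classical
  suffices h : ∀ (n : ℕ) (P : Genome V), changed P Q ≤ n →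
      ∃ t : Transformation P Q, ∀ r ∈ t.pairs, Is2Break r.1 r.2 from
    h (changed P Q) P le_rfl
  intro n
  induction n with
  | zero =>
    intro P hP
    have hPQ : P = Q := by
      apply eq_of_perm_eq
      apply Equiv.ext
      intro v
      by_contra hc
      have hv : v ∈ univ.filter fun u => P.perm u ≠ Q.perm u := by simp [hc]
      rw [Finset.card_eq_zero.mp (Nat.le_zero.mp hP)] at hv
      simp at hv
    subst hPQ
    exact ⟨⟨[], List.Chain.nil, rfl⟩, by simp [Transformation.pairs]⟩
  | succ n ih =>
    intro P hP
    by_cases hPQ : P = Q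
    · subst hPQ; exact ⟨⟨[], List.Chain.nil, rfl⟩, by simp [Transformation.pairs]⟩
    · obtain ⟨P', h2, hlt⟩ := exists_twoBreak_step hPQ
      obtain ⟨t, ht⟩ := ih P' (by omega)
      refine ⟨⟨P' :: t.steps, List.Chain.cons (Or.inl h2) t.chain, ?_⟩, ?_⟩
      · rw [List.getLast_cons (List.cons_ne_nil _ _)]
        exact t.last_eq
      · intro r hr
        simp only [Transformation.pairs, List.zip_cons_cons, List.mem_cons] at hr
        rcases hr with rfl | hr
        · exact h2
        · exact ht r hr

lemma remove_aux : ∀ (l : List (Genome V)) (P Q : Genome V),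
    List.Chain Is3Break P l →
    ((P :: l).getLast (List.cons_ne_nil _ _) = Q) →
    0 < ((P :: l).zip l).countP (fun r => r.1.changed r.2 == 6) →
    ∃ l', ∃ _ : List.Chain Is3Break P l',
      ((P :: l').getLast (List.cons_ne_nil _ _) = Q) ∧
      ((P :: l').zip l').countP (fun r => r.1.changed r.2 == 4)
        = ((P :: l).zip l).countP (fun r => r.1.changed r.2 == 4) + 2 ∧
      ((P :: l').zip l').countP (fun r => r.1.changed r.2 == 6) + 1
        = ((P :: l).zip l).countP (fun r => r.1.changed r.2 == 6)
  | [], P, Q, hc, hl, hpos => absurd hpos (by simp)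
  | b :: l, P, Q, hc, hl, hpos => by
    unfold List.Chain at hc
    rw [List.isChain_cons_cons] at hc
    have hl' : ((b :: l).getLast (List.cons_ne_nil _ _) = Q) := by
      rw [← hl, List.getLast_cons (List.cons_ne_nil _ _)]
    by_cases h6 : P.changed b = 6
    · obtain ⟨C, hPC, hCb⟩ := split3 h6
      have hPC' : P.changed C = 4 := hPC
      have hCb' : C.changed b = 4 := hCb
      refine ⟨C :: b :: l,
        List.Chain.cons (Or.inl hPC) (List.Chain.cons (Or.inl hCb) hc.2), ?_, ?_, ?_⟩
      · rw [List.getLast_cons (List.cons_ne_nil _ _)]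
        exact hl'
      · simp [List.zip_cons_cons, List.countP_cons, hPC', hCb', h6]
      · simp [List.zip_cons_cons, List.countP_cons, hPC', hCb', h6]
    · have hpos' : 0 < ((b :: l).zip l).countP (fun r => r.1.changed r.2 == 6) := by
        simp only [List.zip_cons_cons, List.countP_cons] at hpos
        simpa [h6] using hpos
      obtain ⟨l', hc', hl2, h4, h6'⟩ := remove_aux l b Q hc.2 hl' hpos'
      refine ⟨b :: l', List.Chain.cons hc.1 hc', ?_, ?_, ?_⟩
      · rw [List.getLast_cons (List.cons_ne_nil _ _)]; exact hl2
      · simp only [List.zip_cons_cons, List.countP_cons]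
        omega
      · simp only [List.zip_cons_cons, List.countP_cons]
        omega

lemma remove_one {P Q : Genome V} (t : Transformation P Q) (h : 0 < t.n3) :
    ∃ t' : Transformation P Q, t'.n2 = t.n2 + 2 ∧ t'.n3 + 1 = t.n3 := by
  obtain ⟨l', hc', hl2, h4, h6⟩ := remove_aux t.steps P Q t.chain t.last_eq h
  exact ⟨⟨l', hc', hl2⟩, h4, h6⟩

lemma n2_n3_of_all2 {P Q : Genome V} (t : Transformation P Q)
    (h : ∀ r ∈ t.pairs, Is2Break r.1 r.2) : t.n2 = t.len ∧ t.n3 = 0 := by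
  constructor
  · have hlen : t.pairs.length = t.len := by
      simp [Transformation.pairs, Transformation.len, List.length_zip]
    rw [Transformation.n2, ← hlen]
    rw [List.countP_eq_length]
    intro r hr
    have := h r hr
    simp [Is2Break] at this
    simp [this]
  · rw [Transformation.n3, List.countP_eq_zero]
    intro r hr
    have := h r hr
    simp [Is2Break] at this
    simp [this]

lemma all2_of_n3_zero {P Q : Genome V} (t : Transformation P Q) (h : t.n3 = 0) :
    ∀ r ∈ t.pairs, Is2Break r.1 r.2 := by
  intro r hr
  rcases chain_pairs t.steps P t.chain r hr with h2 | h3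
  · exact h2
  · exfalso
    have := List.countP_eq_zero.mp h r hr
    simp [Is3Break, IsComplete3Break] at h3 this
    exact this h3

lemma W_remove {α : ℝ} {P Q : Genome V} (t t' : Transformation P Q)
    (h2 : t'.n2 = t.n2 + 2) (h3 : t'.n3 + 1 = t.n3) :
    t'.W α = t.W α + 2 - α := by
  unfold Transformation.W
  rw [h2, ← h3]
  push_cast
  ring

lemma W_of_all2 {P Q : Genome V} (α : ℝ) (t : Transformation P Q)
    (h : ∀ r ∈ t.pairs, Is2Break r.1 r.2) : t.W α = t.len := by
  obtain ⟨h1, h2⟩ := n2_n3_of_all2 t h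
  unfold Transformation.W
  rw [h1, h2]
  simp

lemma to_all2 {α : ℝ} (hα : 2 ≤ α) {P Q : Genome V} :
    ∀ (n : ℕ) (t : Transformation P Q), t.n3 ≤ n →
      ∃ t2 : Transformation P Q, (∀ r ∈ t2.pairs, Is2Break r.1 r.2) ∧ t2.W α ≤ t.W α := by
  intro n
  induction n with
  | zero => exact fun t ht => ⟨t, all2_of_n3_zero t (Nat.le_zero.mp ht), le_rfl⟩
  | succ n ih =>
    intro t ht
    by_cases h0 : t.n3 = 0
    · exact ⟨t, all2_of_n3_zero t h0, le_rfl⟩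
    · obtain ⟨t', h2, h3⟩ := remove_one t (Nat.pos_of_ne_zero h0)
      obtain ⟨t2, ha, hw⟩ := ih t' (by omega)
      refine ⟨t2, ha, hw.trans ?_⟩
      rw [W_remove t t' h2 h3]
      linarith

end Genome

open Genome in
/-- for `α ≥ 2`, every complete 3-break can be replaced by two
2-breaks without increasing the weight (strictly decreasing it when `α > 2`);
consequently there is a minimum-weight transformation consisting only of
2-breaks, and `D_α(P,Q) = d₂(P,Q)`. -/
theorem stmt17 {V : Type*} [Fintype V] [DecidableEq V] (α : ℝ) (hα : 2 ≤ α) :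
    (∀ A B : Genome V, IsComplete3Break A B →
      ∃ C : Genome V, Is2Break A C ∧ Is2Break C B) ∧
    (∀ (P Q : Genome V) (t : Transformation P Q), 0 < t.n3 →
      ∃ t' : Transformation P Q, t'.n2 = t.n2 + 2 ∧ t'.n3 = t.n3 - 1 ∧
        t'.W α ≤ t.W α ∧ (2 < α → t'.W α < t.W α)) ∧
    (∀ P Q : Genome V,
      (∃ t : Transformation P Q, (∀ r ∈ t.pairs, Is2Break r.1 r.2) ∧
        t.W α = Dist α P Q) ∧ Dist α P Q = (d2 P Q : ℝ)) := by
  refine ⟨fun A B h => split3 h, ?_, ?_⟩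
  · intro P Q t ht
    obtain ⟨t', h2, h3⟩ := remove_one t ht
    refine ⟨t', h2, by omega, ?_, ?_⟩
    · rw [W_remove t t' h2 h3]; linarith
    · intro hlt; rw [W_remove t t' h2 h3]; linarith
  · intro P Q
    obtain ⟨t0, ht0⟩ := exists_all2 P Q
    have hne : {m | ∃ t : Transformation P Q,
        (∀ r ∈ t.pairs, Is2Break r.1 r.2) ∧ t.len = m}.Nonempty := ⟨t0.len, t0, ht0, rfl⟩
    obtain ⟨tm, htm, htlen⟩ := Nat.sInf_mem hne
    have hWtm : tm.W α = (d2 P Q : ℝ) := by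
      rw [W_of_all2 α tm htm, htlen]; rfl
    have hlb : ∀ w ∈ {w | ∃ t : Transformation P Q, Transformation.W α t = w},
        (d2 P Q : ℝ) ≤ w := by
      rintro w ⟨t, rfl⟩
      obtain ⟨t2, ha2, hw2⟩ := to_all2 hα t.n3 t le_rfl
      refine le_trans ?_ hw2
      rw [W_of_all2 α t2 ha2]
      have hle : d2 P Q ≤ t2.len :=
        Nat.sInf_le (show t2.len ∈ {m | ∃ t : Transformation P Q,
          (∀ r ∈ t.pairs, Is2Break r.1 r.2) ∧ t.len = m} from ⟨t2, ha2, rfl⟩)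
      exact_mod_cast hle
    have hmem : (d2 P Q : ℝ) ∈ {w | ∃ t : Transformation P Q, Transformation.W α t = w} :=
      ⟨tm, hWtm⟩
    have hd : Dist α P Q = (d2 P Q : ℝ) := by
      unfold Genome.Dist
      exact le_antisymm (csInf_le ⟨(d2 P Q : ℝ), hlb⟩ hmem) (le_csInf ⟨_, hmem⟩ hlb)
    exact ⟨⟨tm, htm, by rw [hWtm, hd]⟩, hd⟩
end
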